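/- Let c(k) : Fin N → ℝ^d evolve under a distributed update on a directed graph, and define for each node i the radius R_i(k+1, k') = max_{j ∈ N⁻_i} ( ‖c(k'+k+1)(i) − c(k'+k)(j)‖ + R_j(k, k') ) with R_i(0, k') = 0. Then for every node j whose shortest directed path from i has length at most k, c(k')(j) lies in the closed ball of radius R_i(k, k') centered at c(k'+k)(i). In particular, if D is the graph diameter, every node's value at time k' lies in the ball B(c(k'+D)(i), R_i(D, k')). -/
import Mathlib


/-- Iterated in-neighborhood: nodes from which `i` can be reached in at most `k` hops. -/
def finNbhdIter {N : ℕ} (Nin : Fin N → Finset (Fin N)) (i : Fin N) : ℕ → Finset (Fin N)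
  | 0 => {i}
  | k + 1 => (finNbhdIter Nin i k).biUnion Nin

lemma finNbhdIter_succ_comm {N : ℕ} (Nin : Fin N → Finset (Fin N)) (i : Fin N) (k : ℕ) :
    finNbhdIter Nin i (k + 1) = (Nin i).biUnion (fun j => finNbhdIter Nin j k) := by
  induction k generalizing i with
  | zero =>
    simp [finNbhdIter]
  | succ k ih =>
    show (finNbhdIter Nin i (k+1)).biUnion Nin = _
    rw [ih i]
    ext x
    simp only [Finset.mem_biUnion]
    constructor
    · rintro ⟨m, ⟨j, hj, hm⟩, hx⟩
      exact ⟨j, hj, by rw [show k + 1 = k + 1 from rfl]; exact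
        (by show x ∈ (finNbhdIter Nin j k).biUnion Nin; exact Finset.mem_biUnion.2 ⟨m, hm, hx⟩)⟩
    · rintro ⟨j, hj, hx⟩
      have : x ∈ (finNbhdIter Nin j k).biUnion Nin := hx
      rcases Finset.mem_biUnion.1 this with ⟨m, hm, hx'⟩
      exact ⟨m, ⟨j, hj, hm⟩, hx'⟩

theorem stmt_16 {N d : ℕ} (c : ℕ → Fin N → EuclideanSpace ℝ (Fin d))
    (Nin : Fin N → Finset (Fin N)) (hself : ∀ i, i ∈ Nin i)
    (R : Fin N → ℕ → ℕ → ℝ)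
    (hR0 : ∀ i k', R i 0 k' = 0)
    (hRs : ∀ i k k', R i (k + 1) k' =
      ((Nin i).sup' ⟨i, hself i⟩
        fun j => ‖c (k' + k + 1) i - c (k' + k) j‖ + R j k k')) :
    (∀ k k' i, ∀ j ∈ finNbhdIter Nin i k,
        ‖c k' j - c (k' + k) i‖ ≤ R i k k') ∧
      ∀ D : ℕ, (∀ i, finNbhdIter Nin i D = Finset.univ) →
        ∀ k' i j, ‖c k' j - c (k' + D) i‖ ≤ R i D k' := by
  have main : ∀ k k' i, ∀ j ∈ finNbhdIter Nin i k,
      ‖c k' j - c (k' + k) i‖ ≤ R i k k' := by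
    intro k
    induction k with
    | zero =>
      intro k' i j hj
      simp only [finNbhdIter, Finset.mem_singleton] at hj
      subst hj
      simp [hR0]
    | succ k ih =>
      intro k' i j hj
      rw [finNbhdIter_succ_comm] at hj
      rcases Finset.mem_biUnion.1 hj with ⟨m, hm, hjm⟩
      have h1 := ih k' m j hjm
      have tri : ‖c k' j - c (k' + (k+1)) i‖ ≤
          ‖c k' j - c (k' + k) m‖ + ‖c (k' + k + 1) i - c (k' + k) m‖ := by
        have : c k' j - c (k' + (k+1)) i =
            (c k' j - c (k' + k) m) - (c (k' + k + 1) i - c (k' + k) m) := by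
          show c k' j - c (k' + k + 1) i = _
          abel
        rw [this]
        exact norm_sub_le _ _
      rw [hRs]
      have hle : ‖c (k' + k + 1) i - c (k' + k) m‖ + R m k k' ≤
          (Nin i).sup' ⟨i, hself i⟩ (fun j => ‖c (k' + k + 1) i - c (k' + k) j‖ + R j k k') :=
        Finset.le_sup' (fun j => ‖c (k' + k + 1) i - c (k' + k) j‖ + R j k k') hm
      calc ‖c k' j - c (k' + (k+1)) i‖
          ≤ ‖c k' j - c (k' + k) m‖ + ‖c (k' + k + 1) i - c (k' + k) m‖ := tri
        _ ≤ R m k k' + ‖c (k' + k + 1) i - c (k' + k) m‖ := by linarith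
        _ = ‖c (k' + k + 1) i - c (k' + k) m‖ + R m k k' := by ring
        _ ≤ _ := hle
  refine ⟨main, fun D hD k' i j => main D k' i j ?_⟩
  rw [hD]; exact Finset.mem_univ j
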